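/- Let G_Zador(n) = Γ(1+2/n)/(n V_n^{2/n}) with V_n = π^{n/2}/Γ(1+n/2), and let G*(n) = 1/((n+2) V_n^{2/n}). Then log G_Zador(n) = −log(2π) − 1 + (log(πn) − 2γ)/n + O(n^{-2}) as n → ∞, where γ is the Euler–Mascheroni constant; in particular G_Zador(n)/G*(n) = 1 + Ω(1/n). -/

import Mathlib

open Real Filter Nat Topology

lemma log1p_le (t : ℝ) (ht : 0 ≤ t) : Real.log (1+t) ≤ t := by
  have := Real.log_le_sub_one_of_pos (show (0:ℝ) < 1+t by linarith); linarith

lemma le_log1p (t : ℝ) (ht : 0 ≤ t) : t - t^2 ≤ Real.log (1+t) := by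
  have hpos : (0:ℝ) < 1 + t := by linarith
  have h1 : 1 - (1+t)⁻¹ ≤ Real.log (1+t) := Real.one_sub_inv_le_log_of_pos hpos
  have h2 : (1+t) * (1+t)⁻¹ = 1 := mul_inv_cancel₀ hpos.ne'
  nlinarith [inv_nonneg.mpr hpos.le]

lemma tendsto_log_stirling : Tendsto (fun n => Real.log (Stirling.stirlingSeq n)) atTop (𝓝 (Real.log (Real.sqrt π))) :=
  (Real.continuousAt_log (by positivity)).tendsto.comp Stirling.tendsto_stirlingSeq_sqrt_pi

lemma sqrtpi_le_stirling (n : ℕ) (hn : 1 ≤ n) : Real.sqrt π ≤ Stirling.stirlingSeq n := by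
  refine le_of_tendsto Stirling.tendsto_stirlingSeq_sqrt_pi ?_
  filter_upwards [eventually_ge_atTop n] with m hm
  obtain ⟨a, rfl⟩ := Nat.exists_eq_add_of_le hn
  obtain ⟨b, rfl⟩ := Nat.exists_eq_add_of_le hm
  have := Stirling.stirlingSeq'_antitone (show a ≤ a + b by omega)
  simp only [Function.comp, Nat.succ_eq_add_one] at this
  convert this using 2 <;> omega

lemma aux_frac (a : ℝ) (ha : 1 ≤ a) : 1/(4*(a+1)^2) ≤ 1/4 * (1/a - 1/(a+1)) := by
  have e : 1/4 * (1/a - 1/(a+1)) = 1/(4*a*(a+1)) := by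
    field_simp
    ring
  rw [e]
  apply one_div_le_one_div_of_le (by positivity)
  nlinarith

lemma stirling_diff_bound (n : ℕ) (hn : 2 ≤ n) (k : ℕ) :
    Real.log (Stirling.stirlingSeq n) - Real.log (Stirling.stirlingSeq (n + k)) ≤
      (1/4) * (1/((n:ℝ)-1) - 1/((n:ℝ)-1+k)) := by
  induction k with
  | zero => simp
  | succ k ih =>
    have hidx : n + k - 1 + 2 = n + k + 1 := by omega
    have hstep := Stirling.log_stirlingSeq_sub_log_stirlingSeq_succ (n + k - 1 + 1)
    rw [show n + k - 1 + 1 = n + k by omega] at hstep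
    have ha : (1:ℝ) ≤ (n:ℝ) - 1 + k := by
      have : (2:ℝ) ≤ n := by exact_mod_cast hn
      have : (0:ℝ) ≤ k := Nat.cast_nonneg k
      linarith
    set a : ℝ := (n:ℝ) - 1 + k with hadef
    have hb : ((n + k : ℕ) : ℝ) = a + 1 := by push_cast; ring
    have key : 1 / (4 * ((n + k : ℕ):ℝ)^2) ≤ (1/4) * (1/a - 1/(a+1)) := by
      rw [hb]; exact aux_frac a ha
    have hfin : Real.log (Stirling.stirlingSeq n) - Real.log (Stirling.stirlingSeq (n + k + 1)) ≤
        (1/4) * (1/((n:ℝ)-1) - 1/(a+1)) := by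
      have := add_le_add ih (hstep.trans key)
      linarith
    rw [show n + (k+1) = n + k + 1 from rfl]
    convert hfin using 3
    push_cast; ring

lemma stirling_log_le (n : ℕ) (hn : 2 ≤ n) :
    Real.log (Stirling.stirlingSeq n) - Real.log (Real.sqrt π) ≤ 1/(4*((n:ℝ)-1)) := by
  have hlim : Tendsto (fun k => Real.log (Stirling.stirlingSeq n) - Real.log (Stirling.stirlingSeq (n + k)))
      atTop (𝓝 (Real.log (Stirling.stirlingSeq n) - Real.log (Real.sqrt π))) := by
    exact tendsto_const_nhds.sub (tendsto_log_stirling.comp (tendsto_add_atTop_nat n |>.comp tendsto_id) |>.congr (fun k => by simp [Nat.add_comm]))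
  refine le_of_tendsto hlim ?_
  filter_upwards with k
  have := stirling_diff_bound n hn k
  have h2 : (2:ℝ) ≤ n := by exact_mod_cast hn
  have hk : (0:ℝ) ≤ k := Nat.cast_nonneg k
  have : (1/4) * (1/((n:ℝ)-1) - 1/((n:ℝ)-1+k)) ≤ 1/(4*((n:ℝ)-1)) := by
    have hpos : (0:ℝ) < (n:ℝ)-1+k := by linarith
    have : (0:ℝ) ≤ 1/((n:ℝ)-1+k) := by positivity
    rw [one_div (4*((n:ℝ)-1)), mul_comm]
    rw [show (4:ℝ)*((n:ℝ)-1) = ((n:ℝ)-1)*4 by ring, mul_inv, ← one_div ((n:ℝ)-1), ← one_div 4]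
    linarith [mul_le_mul_of_nonneg_right (show 1/((n:ℝ)-1) - 1/((n:ℝ)-1+k) ≤ 1/((n:ℝ)-1) by linarith) (show (0:ℝ) ≤ 1/4 by norm_num)]
  linarith [stirling_diff_bound n hn k]

lemma log_factorial_eq (m : ℕ) (hm : 1 ≤ m) :
    Real.log (m.factorial) = m*Real.log m - m + Real.log (2*π*(m:ℝ))/2
      + (Real.log (Stirling.stirlingSeq m) - Real.log (Real.sqrt π)) := by
  have hm' : (0:ℝ) < m := by exact_mod_cast hm
  have h := Stirling.log_stirlingSeq_formula m
  have hlogdiv : Real.log ((m:ℝ) / Real.exp 1) = Real.log m - 1 := by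
    rw [Real.log_div hm'.ne' (Real.exp_ne_zero 1), Real.log_exp]
  have hsqrt : Real.log (Real.sqrt π) = Real.log π / 2 := by
    rw [Real.log_sqrt Real.pi_pos.le]
  have h2m : Real.log (2*π*(m:ℝ)) = Real.log (2*(m:ℝ)) + Real.log π := by
    rw [show 2*π*(m:ℝ) = (2*(m:ℝ))*π by ring, Real.log_mul (by positivity) Real.pi_pos.ne']
  rw [hlogdiv] at h
  have : Real.log (m.factorial) = Real.log (Stirling.stirlingSeq m) + 1/2 * Real.log (2*m) + m * (Real.log m - 1) := by
    linarith
  rw [this, h2m, hsqrt]; ring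

lemma basel_le_two (n : ℕ) : (∑ j ∈ Finset.range (n+1), (1:ℝ)/((j:ℝ)+1)^2) ≤ 2 - 1/((n:ℝ)+1) := by
  induction n with
  | zero => norm_num
  | succ n ih =>
    rw [Finset.sum_range_succ]
    have hn : (0:ℝ) ≤ n := Nat.cast_nonneg n
    have h1 : (1:ℝ)/(((n:ℕ):ℝ)+1+1)^2 ≤ 1/((n:ℝ)+1) - 1/((n:ℝ)+1+1) := by
      have he : (1:ℝ)/((n:ℝ)+1) - 1/((n:ℝ)+1+1) = 1/(((n:ℝ)+1)*((n:ℝ)+1+1)) := by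
        rw [div_sub_div _ _ (by positivity) (by positivity)]
        congr 1
        ring
      rw [he]
      apply one_div_le_one_div_of_le (by positivity)
      nlinarith
    push_cast
    push_cast at ih h1
    linarith

lemma logGamma_bound (x : ℝ) (hx0 : 0 < x) (hx1 : x ≤ 1) :
    0 ≤ Real.log (Real.Gamma (1+x)) + Real.eulerMascheroniConstant * x ∧
      Real.log (Real.Gamma (1+x)) + Real.eulerMascheroniConstant * x ≤ 2*x^2 := by
  set S : ℕ → ℝ := fun n => ∑ j ∈ Finset.range (n+1),
    (x/((j:ℝ)+1) - Real.log (1+x/((j:ℝ)+1))) with hSdef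
  -- identity
  have hid : ∀ n : ℕ, 1 ≤ n → S n = Real.log (Real.GammaSeq (1+x) n)
      + x * (((harmonic (n+1) : ℚ) : ℝ) - Real.log ((n:ℝ)+1))
      + (1+x) * (Real.log ((n:ℝ)+1) - Real.log (n:ℝ)) := by
    intro n hn
    have hn' : (0:ℝ) < n := by exact_mod_cast hn
    have hterm : ∀ j ∈ Finset.range (n+1), ((1+x) + (j:ℝ)) = ((j:ℝ)+1) * (1 + x/((j:ℝ)+1)) := by
      intro j _
      have : ((j:ℝ)+1) ≠ 0 := by positivity
      field_simp
      ring
    have hprod : ∏ j ∈ Finset.range (n+1), ((1+x) + (j:ℝ))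
        = ((n+1).factorial : ℝ) * ∏ j ∈ Finset.range (n+1), (1 + x/((j:ℝ)+1)) := by
      rw [Finset.prod_congr rfl hterm, Finset.prod_mul_distrib]
      congr 1
      rw [← Finset.prod_range_add_one_eq_factorial (n+1)]
      push_cast
      rfl
    have hfacpos : ∀ j ∈ Finset.range (n+1), (0:ℝ) < 1 + x/((j:ℝ)+1) := by
      intro j _; positivity
    have hlogprod : Real.log (∏ j ∈ Finset.range (n+1), ((1+x) + (j:ℝ)))
        = Real.log ((n+1).factorial : ℝ) + ∑ j ∈ Finset.range (n+1), Real.log (1 + x/((j:ℝ)+1)) := by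
      rw [hprod, Real.log_mul (by positivity) ?_, Real.log_prod]
      · intro j hj; exact (hfacpos j hj).ne'
      · exact (Finset.prod_pos hfacpos).ne'
    have hG : Real.log (Real.GammaSeq (1+x) n) = (1+x) * Real.log n + Real.log (n.factorial : ℝ)
        - Real.log (∏ j ∈ Finset.range (n+1), ((1+x) + (j:ℝ))) := by
      rw [Real.GammaSeq, Real.log_div (by positivity) ?hne, Real.log_mul (by positivity) (by positivity),
        Real.log_rpow hn']
      case hne =>
        refine (Finset.prod_pos ?_).ne'
        intro j _
        have : (0:ℝ) ≤ j := Nat.cast_nonneg j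
        linarith
    have hharm : ((harmonic (n+1) : ℚ) : ℝ) = ∑ j ∈ Finset.range (n+1), 1/((j:ℝ)+1) := by
      rw [harmonic]
      push_cast
      simp [one_div]
    have hfact : Real.log (((n+1).factorial) : ℝ) = Real.log ((n.factorial : ℝ)) + Real.log ((n:ℝ)+1) := by
      rw [Nat.factorial_succ]
      push_cast
      rw [Real.log_mul (by positivity) (by positivity)]
      ring
    have hsum : S n = x * ((harmonic (n+1) : ℚ) : ℝ) - ∑ j ∈ Finset.range (n+1), Real.log (1 + x/((j:ℝ)+1)) := by
      simp only [hSdef]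
      rw [Finset.sum_sub_distrib, hharm, Finset.mul_sum]
      congr 1
      apply Finset.sum_congr rfl
      intro j _
      rw [mul_one_div]
    have : ∑ j ∈ Finset.range (n+1), Real.log (1 + x/((j:ℝ)+1))
        = (1+x) * Real.log n + Real.log (n.factorial : ℝ) - Real.log (((n+1).factorial) : ℝ)
          - Real.log (Real.GammaSeq (1+x) n) := by
      rw [hG, hlogprod]; ring
    rw [hsum, this, hfact]
    ring
  -- limit
  have hΓpos : (0:ℝ) < Real.Gamma (1+x) := Real.Gamma_pos_of_pos (by linarith)
  have hT1 : Tendsto (fun n => Real.log (Real.GammaSeq (1+x) n)) atTop (𝓝 (Real.log (Real.Gamma (1+x)))) :=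
    (Real.continuousAt_log hΓpos.ne').tendsto.comp (Real.GammaSeq_tendsto_Gamma (1+x))
  have hT2 : Tendsto (fun n : ℕ => ((harmonic (n+1) : ℚ) : ℝ) - Real.log ((n:ℝ)+1)) atTop
      (𝓝 Real.eulerMascheroniConstant) := by
    have := Real.tendsto_harmonic_sub_log.comp (tendsto_add_atTop_nat 1)
    refine this.congr (fun n => ?_)
    simp only [Function.comp]
    push_cast
    rfl
  have hT3 : Tendsto (fun n : ℕ => Real.log ((n:ℝ)+1) - Real.log (n:ℝ)) atTop (𝓝 0) := by
    have h1 : Tendsto (fun n : ℕ => 1 + 1/(n:ℝ)) atTop (𝓝 1) := by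
      simpa using (tendsto_const_nhds (x := (1:ℝ))).add tendsto_one_div_atTop_nhds_zero_nat
    have h2 : Tendsto (fun n : ℕ => Real.log (1 + 1/(n:ℝ))) atTop (𝓝 0) := by
      have := h1.log one_ne_zero
      simpa using this
    refine h2.congr' ?_
    filter_upwards [eventually_ge_atTop 1] with n hn
    have hn' : (0:ℝ) < n := by exact_mod_cast hn
    rw [show (1:ℝ) + 1/(n:ℝ) = ((n:ℝ)+1)/n by field_simp, Real.log_div (by positivity) hn'.ne']
  have hS : Tendsto S atTop (𝓝 (Real.log (Real.Gamma (1+x)) + Real.eulerMascheroniConstant * x)) := by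
    have := (hT1.add (hT2.const_mul x)).add (hT3.const_mul (1+x))
    rw [show Real.log (Real.Gamma (1+x)) + Real.eulerMascheroniConstant * x
      = Real.log (Real.Gamma (1+x)) + x * Real.eulerMascheroniConstant + (1+x) * 0 by ring]
    refine this.congr' ?_
    filter_upwards [eventually_ge_atTop 1] with n hn
    rw [hid n hn]
  -- bounds on S
  have hS0 : ∀ n : ℕ, 0 ≤ S n := by
    intro n
    apply Finset.sum_nonneg
    intro j _
    have ht : (0:ℝ) ≤ x/((j:ℝ)+1) := by positivity
    linarith [log1p_le _ ht]
  have hS2 : ∀ n : ℕ, S n ≤ 2*x^2 := by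
    intro n
    have h1 : S n ≤ ∑ j ∈ Finset.range (n+1), x^2 * (1/((j:ℝ)+1)^2) := by
      apply Finset.sum_le_sum
      intro j _
      have ht : (0:ℝ) ≤ x/((j:ℝ)+1) := by positivity
      have := le_log1p _ ht
      have he : (x/((j:ℝ)+1))^2 = x^2 * (1/((j:ℝ)+1)^2) := by
        rw [div_pow]; ring
      linarith [le_log1p (x/((j:ℝ)+1)) ht, he ▸ (by linarith [le_log1p (x/((j:ℝ)+1)) ht] :
        x/((j:ℝ)+1) - Real.log (1+x/((j:ℝ)+1)) ≤ (x/((j:ℝ)+1))^2)]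
    rw [← Finset.mul_sum] at h1
    have h2 : ∑ j ∈ Finset.range (n+1), (1:ℝ)/((j:ℝ)+1)^2 ≤ 2 := by
      have := basel_le_two n
      have : (0:ℝ) < 1/((n:ℝ)+1) := by positivity
      linarith [basel_le_two n]
    nlinarith [sq_nonneg x]
  exact ⟨ge_of_tendsto hS (Eventually.of_forall hS0),
    le_of_tendsto hS (Eventually.of_forall hS2)⟩

lemma gamma_half_bounds (m : ℕ) (hm : 1 ≤ m) :
    Real.log (m.factorial) + Real.log m / 2 ≤ Real.log (Real.Gamma ((m:ℝ) + 3/2)) ∧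
    Real.log (Real.Gamma ((m:ℝ) + 3/2)) ≤ Real.log (m.factorial) + Real.log ((m:ℝ)+1) / 2 := by
  have hm' : (0:ℝ) < m := by exact_mod_cast hm
  have hc := Real.convexOn_log_Gamma
  have hf1 : Real.log (Real.Gamma ((m:ℝ) + 1)) = Real.log (m.factorial) := by
    rw [Real.Gamma_nat_eq_factorial]
  have hf2 : Real.log (Real.Gamma ((m:ℝ) + 2)) = Real.log (m.factorial) + Real.log ((m:ℝ)+1) := by
    have : (m:ℝ) + 2 = ((m+1 : ℕ) : ℝ) + 1 := by push_cast; ring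
    rw [this, Real.Gamma_nat_eq_factorial, Nat.factorial_succ]
    push_cast
    rw [Real.log_mul (by positivity) (by positivity)]
    ring
  have hf0 : Real.log (Real.Gamma (m:ℝ)) = Real.log (m.factorial) - Real.log m := by
    have h := Real.Gamma_add_one (show (m:ℝ) ≠ 0 by positivity)
    have hΓ : (0:ℝ) < Real.Gamma (m:ℝ) := Real.Gamma_pos_of_pos hm'
    have h2 : Real.log (Real.Gamma ((m:ℝ)+1)) = Real.log m + Real.log (Real.Gamma (m:ℝ)) := by
      rw [h, Real.log_mul hm'.ne' hΓ.ne']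
    rw [hf1] at h2
    linarith
  constructor
  · -- lower bound: f(m+1) ≤ (1/3) f(m) + (2/3) f(m+3/2)
    have hmem1 : (m:ℝ) ∈ Set.Ioi (0:ℝ) := hm'
    have hmem2 : (m:ℝ) + 3/2 ∈ Set.Ioi (0:ℝ) := by simp; linarith
    have h := hc.2 hmem1 hmem2 (by norm_num : (0:ℝ) ≤ 1/3) (by norm_num : (0:ℝ) ≤ 2/3) (by norm_num)
    simp only [smul_eq_mul, Function.comp] at h
    have harg : (1/3 : ℝ) * m + (2/3) * ((m:ℝ) + 3/2) = (m:ℝ) + 1 := by ring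
    rw [harg] at h
    rw [hf1, hf0] at h
    linarith
  · have hmem1 : (m:ℝ) + 1 ∈ Set.Ioi (0:ℝ) := by simp; linarith
    have hmem2 : (m:ℝ) + 2 ∈ Set.Ioi (0:ℝ) := by simp; linarith
    have h := hc.2 hmem1 hmem2 (by norm_num : (0:ℝ) ≤ 1/2) (by norm_num : (0:ℝ) ≤ 1/2) (by norm_num)
    simp only [smul_eq_mul, Function.comp] at h
    have harg : (1/2 : ℝ) * ((m:ℝ)+1) + (1/2) * ((m:ℝ) + 2) = (m:ℝ) + 3/2 := by ring
    rw [harg] at h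
    rw [hf1, hf2] at h
    linarith

lemma inv_4m1_le (M : ℝ) (hM : 2 ≤ M) : 1/(4*(M-1)) ≤ 1/M := by
  apply one_div_le_one_div_of_le (by linarith)
  linarith

set_option maxHeartbeats 1000000 in
lemma D_bound (n : ℕ) (hn : 6 ≤ n) :
    |Real.log (Real.Gamma (1 + (n:ℝ)/2))
      - ((n:ℝ)/2 * Real.log ((n:ℝ)/2) - (n:ℝ)/2 + Real.log (π*(n:ℝ))/2)| ≤ 9/(n:ℝ) := by
  rcases Nat.even_or_odd n with ⟨m, rfl⟩ | ⟨m, rfl⟩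
  · -- even case : n = m + m
    have hm : 3 ≤ m := by omega
    have hM : (3:ℝ) ≤ m := by exact_mod_cast hm
    have hcast : (1:ℝ) + ((m+m : ℕ):ℝ)/2 = (m:ℝ) + 1 := by push_cast; ring
    rw [hcast, Real.Gamma_nat_eq_factorial]
    have hlf := log_factorial_eq m (by omega)
    have hE0 : 0 ≤ Real.log (Stirling.stirlingSeq m) - Real.log (Real.sqrt π) := by
      have h1 := sqrtpi_le_stirling m (by omega)
      have := Real.log_le_log (by positivity) h1
      linarith
    have hE1 := stirling_log_le m (by omega)
    have hE2 : Real.log (Stirling.stirlingSeq m) - Real.log (Real.sqrt π) ≤ 1/(m:ℝ) := by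
      have := inv_4m1_le (m:ℝ) (by linarith)
      linarith
    have hhalf : ((m+m:ℕ):ℝ)/2 = (m:ℝ) := by push_cast; ring
    have hpi : Real.log (π * ((m+m:ℕ):ℝ)) = Real.log (2*π*(m:ℝ)) := by
      congr 1; push_cast; ring
    rw [hhalf, hpi, hlf]
    have hb : 1/(m:ℝ) ≤ 9/((m+m:ℕ):ℝ) := by
      rw [div_le_div_iff₀ (by linarith) (by push_cast; linarith)]
      push_cast; linarith
    rw [abs_le]
    constructor
    · have h9 : (0:ℝ) < 9/((m+m:ℕ):ℝ) := by positivity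
      linarith
    · linarith
  · -- odd case : n = 2*m + 1
    have hm : 3 ≤ m := by omega
    have hM : (3:ℝ) ≤ (m:ℝ) := by exact_mod_cast hm
    set M : ℝ := (m:ℝ) with hMdef
    have hM0 : (0:ℝ) < M := by linarith
    have hcast : (1:ℝ) + ((2*m+1 : ℕ):ℝ)/2 = M + 3/2 := by push_cast; ring
    rw [hcast]
    obtain ⟨hglo, hgup⟩ := gamma_half_bounds m (by omega)
    have hlf := log_factorial_eq m (by omega)
    set E : ℝ := Real.log (Stirling.stirlingSeq m) - Real.log (Real.sqrt π) with hEdef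
    have hE0 : 0 ≤ E := by
      have h1 := sqrtpi_le_stirling m (by omega)
      have := Real.log_le_log (by positivity) h1
      simp only [hEdef]; linarith
    have hE2 : E ≤ 1/M := by
      have h1 := stirling_log_le m (by omega)
      have h2 := inv_4m1_le M (by linarith)
      simp only [hEdef]; linarith
    set L : ℝ := Real.log (1 + 1/(2*M)) with hLdef
    set V : ℝ := Real.log (1 + 1/M) with hVdef
    have hLu : L ≤ 1/(2*M) := log1p_le _ (by positivity)
    have hLl : 1/(2*M) - (1/(2*M))^2 ≤ L := le_log1p _ (by positivity)
    have hVu : V ≤ 1/M := log1p_le _ (by positivity)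
    have hV0 : 0 ≤ V := by
      simp only [hVdef]
      apply Real.log_nonneg
      have : (0:ℝ) ≤ 1/M := by positivity
      linarith
    -- log identities
    have hloghalf : Real.log (((2*m+1 : ℕ):ℝ)/2) = Real.log M + L := by
      have harg : ((2*m+1 : ℕ):ℝ)/2 = M * (1 + 1/(2*M)) := by
        simp only [hMdef]; push_cast; field_simp
      rw [harg, Real.log_mul (by positivity) (by positivity), ← hLdef]
    have hlogpin : Real.log (π * ((2*m+1 : ℕ):ℝ)) = Real.log π + (Real.log 2 + Real.log M + L) := by
      have harg : π * ((2*m+1 : ℕ):ℝ) = π * (2 * (M * (1 + 1/(2*M)))) := by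
        simp only [hMdef]; push_cast; field_simp
      rw [harg, Real.log_mul Real.pi_pos.ne' (by positivity),
        Real.log_mul (by norm_num) (by positivity),
        Real.log_mul (by positivity) (by positivity), ← hLdef]
      ring
    have hlogm1 : Real.log (M+1) = Real.log M + V := by
      have harg : M + 1 = M * (1 + 1/M) := by field_simp
      rw [harg, Real.log_mul (by positivity) (by positivity), ← hVdef]
    have hlog2pim : Real.log (2*π*M) = Real.log 2 + Real.log π + Real.log M := by
      rw [Real.log_mul (by positivity) (by positivity), Real.log_mul (by norm_num) Real.pi_pos.ne']
    -- product bounds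
    have hmono1 : (M+1)*L ≤ (M+1)*(1/(2*M)) := mul_le_mul_of_nonneg_left hLu (by linarith)
    have heq1 : (M+1)*(1/(2*M)) = 1/2 + 1/2 * (1/M) := by field_simp
    have hML_u : (M+1)*L ≤ 1/2 + 1/2 * (1/M) := by linarith
    have hmono2 : (M+1)*(1/(2*M) - (1/(2*M))^2) ≤ (M+1)*L := mul_le_mul_of_nonneg_left hLl (by linarith)
    have heq2 : (M+1)*(1/(2*M) - (1/(2*M))^2) - (1/2 - 1/4 * (1/M)) = (2*M-1)/(4*M^2) := by
      field_simp
      ring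
    have hpos2 : (0:ℝ) ≤ (2*M-1)/(4*M^2) := div_nonneg (by linarith) (by positivity)
    have hML_l : 1/2 - 1/4 * (1/M) ≤ (M+1)*L := by linarith
    -- final comparison constants
    have hn2 : ((2*m+1 : ℕ):ℝ) = 2*M+1 := by simp only [hMdef]; push_cast; ring
    have h9 : 7/4 * (1/M) ≤ 9/(2*M+1) := by
      rw [show (7:ℝ)/4 * (1/M) = 7/(4*M) by ring, div_le_div_iff₀ (by linarith) (by linarith)]
      nlinarith
    have h9' : 1/2 * (1/M) ≤ 9/(2*M+1) := by
      rw [show (1:ℝ)/2 * (1/M) = 1/(2*M) by ring, div_le_div_iff₀ (by linarith) (by linarith)]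
      nlinarith
    rw [← hMdef] at hglo hgup hlf
    rw [hloghalf, hlogpin, hn2, abs_le]
    constructor
    · linarith [hgup, hglo, hlf, hlog2pim, hlogm1, hE0, hE2, hML_u, hML_l, hV0, hVu, h9, h9']
    · linarith [hgup, hglo, hlf, hlog2pim, hlogm1, hE0, hE2, hML_u, hML_l, hV0, hVu, h9, h9']

/-- Asymptotic expansion of `log G_Zador(n)` and the fact that
`G_Zador(n)/G*(n) = 1 + Ω(1/n)`. -/
theorem zador_expansion (GZ Gstar : ℕ → ℝ)
    (hGZ : ∀ n : ℕ, GZ n =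
      Real.Gamma (1 + 2 / n) /
        ((n : ℝ) * (π ^ ((n : ℝ) / 2) / Real.Gamma (1 + (n : ℝ) / 2)) ^ ((2 : ℝ) / n)))
    (hGstar : ∀ n : ℕ, Gstar n =
      1 / (((n : ℝ) + 2) * (π ^ ((n : ℝ) / 2) / Real.Gamma (1 + (n : ℝ) / 2)) ^ ((2 : ℝ) / n))) :
    (∃ C : ℝ, ∃ N : ℕ, ∀ n : ℕ, N ≤ n →
      |Real.log (GZ n) -
          (-Real.log (2 * π) - 1 +
            (Real.log (π * n) - 2 * Real.eulerMascheroniConstant) / n)| ≤ C / (n : ℝ) ^ 2) ∧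
    (∃ c : ℝ, 0 < c ∧ ∃ N : ℕ, ∀ n : ℕ, N ≤ n → GZ n / Gstar n - 1 ≥ c / n) := by
  constructor
  · refine ⟨26, 16, fun n hn => ?_⟩
    have hn0 : (0:ℝ) < n := by exact_mod_cast (by omega : 0 < n)
    have hn16 : (16:ℝ) ≤ n := by exact_mod_cast hn
    have hΓ2 : (0:ℝ) < Real.Gamma (1 + 2/(n:ℝ)) := Real.Gamma_pos_of_pos (by positivity)
    have hΓn : (0:ℝ) < Real.Gamma (1 + (n:ℝ)/2) := Real.Gamma_pos_of_pos (by positivity)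
    have hA : (0:ℝ) < π ^ ((n:ℝ)/2) / Real.Gamma (1 + (n:ℝ)/2) := by
      apply div_pos (Real.rpow_pos_of_pos Real.pi_pos _) hΓn
    have hB : (0:ℝ) < (π ^ ((n:ℝ)/2) / Real.Gamma (1 + (n:ℝ)/2)) ^ ((2:ℝ)/n) :=
      Real.rpow_pos_of_pos hA _
    have hGZlog : Real.log (GZ n) = Real.log (Real.Gamma (1 + 2/(n:ℝ))) - Real.log n
        - (2/(n:ℝ)) * ((n:ℝ)/2 * Real.log π - Real.log (Real.Gamma (1 + (n:ℝ)/2))) := by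
      rw [hGZ n, Real.log_div hΓ2.ne' (by positivity), Real.log_mul hn0.ne' hB.ne',
        Real.log_rpow hA, Real.log_div (Real.rpow_pos_of_pos Real.pi_pos _).ne' hΓn.ne',
        Real.log_rpow Real.pi_pos]
      ring
    have e1 : Real.log (π * (n:ℝ)) = Real.log π + Real.log n :=
      Real.log_mul Real.pi_pos.ne' hn0.ne'
    have e2 : Real.log ((n:ℝ)/2) = Real.log n - Real.log 2 :=
      Real.log_div hn0.ne' (by norm_num)
    have e3 : Real.log (2*π) = Real.log 2 + Real.log π :=
      Real.log_mul (by norm_num) Real.pi_pos.ne'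
    set γ := Real.eulerMascheroniConstant with hγdef
    have key : Real.log (GZ n) - (-Real.log (2*π) - 1 + (Real.log (π*(n:ℝ)) - 2*γ)/(n:ℝ))
        = (Real.log (Real.Gamma (1 + 2/(n:ℝ))) + γ*(2/(n:ℝ)))
          + (2/(n:ℝ)) * (Real.log (Real.Gamma (1 + (n:ℝ)/2))
            - ((n:ℝ)/2 * Real.log ((n:ℝ)/2) - (n:ℝ)/2 + Real.log (π*(n:ℝ))/2)) := by
      rw [hGZlog, e1, e2, e3]
      field_simp
      ring
    obtain ⟨hB0, hB2⟩ := logGamma_bound (2/(n:ℝ)) (by positivity)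
      (by rw [div_le_one hn0]; linarith)
    have hD := D_bound n (by omega)
    rw [key]
    have habs : |(Real.log (Real.Gamma (1 + 2/(n:ℝ))) + γ*(2/(n:ℝ)))
          + (2/(n:ℝ)) * (Real.log (Real.Gamma (1 + (n:ℝ)/2))
            - ((n:ℝ)/2 * Real.log ((n:ℝ)/2) - (n:ℝ)/2 + Real.log (π*(n:ℝ))/2))|
        ≤ |Real.log (Real.Gamma (1 + 2/(n:ℝ))) + γ*(2/(n:ℝ))|
          + |(2/(n:ℝ))| * |Real.log (Real.Gamma (1 + (n:ℝ)/2))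
            - ((n:ℝ)/2 * Real.log ((n:ℝ)/2) - (n:ℝ)/2 + Real.log (π*(n:ℝ))/2)| := by
      rw [← abs_mul]
      exact abs_add_le _ _
    have h1 : |Real.log (Real.Gamma (1 + 2/(n:ℝ))) + γ*(2/(n:ℝ))| ≤ 2*(2/(n:ℝ))^2 := by
      rw [abs_of_nonneg hB0]
      exact hB2
    have h2 : |(2/(n:ℝ))| = 2/(n:ℝ) := abs_of_pos (by positivity)
    have hfin : 2*(2/(n:ℝ))^2 + (2/(n:ℝ))*(9/(n:ℝ)) = 26/(n:ℝ)^2 := by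
      field_simp
      ring
    have hmul : |(2/(n:ℝ))| * |Real.log (Real.Gamma (1 + (n:ℝ)/2))
            - ((n:ℝ)/2 * Real.log ((n:ℝ)/2) - (n:ℝ)/2 + Real.log (π*(n:ℝ))/2)|
        ≤ (2/(n:ℝ)) * (9/(n:ℝ)) := by
      rw [h2]
      exact mul_le_mul_of_nonneg_left hD (by positivity)
    linarith [habs, h1, hmul]
  · refine ⟨1/2, by norm_num, 16, fun n hn => ?_⟩
    have hn0 : (0:ℝ) < n := by exact_mod_cast (by omega : 0 < n)
    have hn16 : (16:ℝ) ≤ n := by exact_mod_cast hn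
    have hΓ2 : (0:ℝ) < Real.Gamma (1 + 2/(n:ℝ)) := Real.Gamma_pos_of_pos (by positivity)
    have hΓn : (0:ℝ) < Real.Gamma (1 + (n:ℝ)/2) := Real.Gamma_pos_of_pos (by positivity)
    have hA : (0:ℝ) < π ^ ((n:ℝ)/2) / Real.Gamma (1 + (n:ℝ)/2) := by
      apply div_pos (Real.rpow_pos_of_pos Real.pi_pos _) hΓn
    have hB : (0:ℝ) < (π ^ ((n:ℝ)/2) / Real.Gamma (1 + (n:ℝ)/2)) ^ ((2:ℝ)/n) :=
      Real.rpow_pos_of_pos hA _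
    have hrat : GZ n / Gstar n = Real.Gamma (1 + 2/(n:ℝ)) * (1 + 2*(1/(n:ℝ))) := by
      rw [hGZ n, hGstar n]
      rw [div_div_eq_mul_div, div_one, div_mul_eq_mul_div]
      rw [div_eq_iff (by positivity : ((n:ℝ) * (π ^ ((n:ℝ)/2) / Real.Gamma (1 + (n:ℝ)/2)) ^ ((2:ℝ)/n)) ≠ 0)]
      field_simp
    set γ := Real.eulerMascheroniConstant with hγdef
    obtain ⟨hB0, _⟩ := logGamma_bound (2/(n:ℝ)) (by positivity)
      (by rw [div_le_one hn0]; linarith)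
    have hΓlb : 1 - 2*γ*(1/(n:ℝ)) ≤ Real.Gamma (1 + 2/(n:ℝ)) := by
      have hexp : Real.exp (-(γ*(2/(n:ℝ)))) ≤ Real.Gamma (1 + 2/(n:ℝ)) := by
        rw [← Real.exp_log hΓ2]
        apply Real.exp_le_exp.mpr
        linarith [hB0]
      have := Real.add_one_le_exp (-(γ*(2/(n:ℝ))))
      have heq : -(γ*(2/(n:ℝ))) + 1 = 1 - 2*γ*(1/(n:ℝ)) := by ring
      linarith [heq ▸ this]
    set t : ℝ := 1/(n:ℝ) with htdef
    have ht0 : (0:ℝ) < t := by positivity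
    have ht16 : t ≤ 1/16 := by
      rw [htdef]
      apply one_div_le_one_div_of_le (by norm_num) hn16
    have hγu : γ < 2/3 := Real.eulerMascheroniConstant_lt_two_thirds
    have hγ0 : (0:ℝ) < γ := by
      have := Real.one_half_lt_eulerMascheroniConstant
      rw [hγdef]; linarith
    have hmul : (1 - 2*γ*t) * (1 + 2*t) ≤ Real.Gamma (1 + 2/(n:ℝ)) * (1 + 2*t) :=
      mul_le_mul_of_nonneg_right hΓlb (by nlinarith)
    rw [hrat]
    have hgoal : (1/2:ℝ)/(n:ℝ) = (1/2)*t := by rw [htdef]; ring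
    rw [ge_iff_le, hgoal]
    nlinarith [mul_nonneg (sub_nonneg.mpr hγu.le) ht0.le,
      mul_nonneg (mul_nonneg (sub_nonneg.mpr hγu.le) ht0.le) ht0.le,
      mul_nonneg (mul_nonneg hγ0.le ht0.le) (sub_nonneg.mpr ht16)]
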